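/- For every finite simple graph G, twice the minimum cardinality of an odd cover of G is at least the 2-rank of G; that is, 2·b₂(G) ≥ r₂(G). -/

import Mathlib

open scoped Classical

/-- A list of bicliques `B 0, …, B (k-1)` (each given by a pair of disjoint
vertex subsets) is an *odd cover* of `G` if two distinct vertices are adjacent
in `G` exactly when they lie in opposite parts of an odd number of the bicliques. -/
def IsOddCover {V : Type*} [Fintype V] (G : SimpleGraph V) {k : ℕ}
    (B : Fin k → Finset V × Finset V) : Prop :=
  (∀ i, Disjoint (B i).1 (B i).2) ∧
  ∀ u v : V, u ≠ v →
    (G.Adj u v ↔ Odd (Finset.univ.filter (fun i : Fin k =>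
      (u ∈ (B i).1 ∧ v ∈ (B i).2) ∨ (u ∈ (B i).2 ∧ v ∈ (B i).1))).card)

/-- `b2 G` is the minimum cardinality of an odd cover of `G`. -/
noncomputable def b2 {V : Type*} [Fintype V] (G : SimpleGraph V) : ℕ :=
  sInf {k : ℕ | ∃ B : Fin k → Finset V × Finset V, IsOddCover G B}

/-- `r2 G` is the rank of the adjacency matrix of `G` over `𝔽₂`. -/
noncomputable def r2 {V : Type*} [Fintype V] (G : SimpleGraph V) : ℕ :=
  (Matrix.of fun u v : V => if G.Adj u v then (1 : ZMod 2) else 0).rank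

open Finset Matrix

private lemma sym2_out_mk {V : Type*} (s : Sym2 V) : s(s.out.1, s.out.2) = s :=
  Quot.out_eq s

private lemma oddCover_exists {V : Type*} [Fintype V] (G : SimpleGraph V) :
    ∃ k : ℕ, ∃ B : Fin k → Finset V × Finset V, IsOddCover G B := by
  classical
  refine ⟨G.edgeFinset.card, fun i =>
    ({((G.edgeFinset.equivFin.symm i : Sym2 V)).out.1},
     {((G.edgeFinset.equivFin.symm i : Sym2 V)).out.2}), ?_, ?_⟩
  · intro i
    have hmem : (G.edgeFinset.equivFin.symm i : Sym2 V) ∈ G.edgeSet :=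
      SimpleGraph.mem_edgeFinset.mp (G.edgeFinset.equivFin.symm i).2
    have hadj : G.Adj (G.edgeFinset.equivFin.symm i : Sym2 V).out.1
        (G.edgeFinset.equivFin.symm i : Sym2 V).out.2 := by
      rw [← SimpleGraph.mem_edgeSet, sym2_out_mk]
      exact hmem
    exact Finset.disjoint_singleton.mpr hadj.ne
  · intro u v huv
    have key : ∀ i : Fin G.edgeFinset.card,
        ((u ∈ ({((G.edgeFinset.equivFin.symm i : Sym2 V)).out.1} : Finset V) ∧
          v ∈ ({((G.edgeFinset.equivFin.symm i : Sym2 V)).out.2} : Finset V)) ∨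
         (u ∈ ({((G.edgeFinset.equivFin.symm i : Sym2 V)).out.2} : Finset V) ∧
          v ∈ ({((G.edgeFinset.equivFin.symm i : Sym2 V)).out.1} : Finset V)))
        ↔ (G.edgeFinset.equivFin.symm i : Sym2 V) = s(u, v) := by
      intro i
      simp only [Finset.mem_singleton]
      generalize (G.edgeFinset.equivFin.symm i : Sym2 V) = s
      conv_rhs => rw [← sym2_out_mk s]
      rw [Sym2.eq_iff]
      constructor
      · rintro (⟨h1, h2⟩ | ⟨h1, h2⟩) <;> [exact Or.inl ⟨h1.symm, h2.symm⟩;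
          exact Or.inr ⟨h2.symm, h1.symm⟩]
      · rintro (⟨h1, h2⟩ | ⟨h1, h2⟩) <;> [exact Or.inl ⟨h1.symm, h2.symm⟩;
          exact Or.inr ⟨h2.symm, h1.symm⟩]
    have hfe : (Finset.univ.filter (fun i : Fin G.edgeFinset.card =>
        ((u ∈ ({((G.edgeFinset.equivFin.symm i : Sym2 V)).out.1} : Finset V) ∧
          v ∈ ({((G.edgeFinset.equivFin.symm i : Sym2 V)).out.2} : Finset V)) ∨
         (u ∈ ({((G.edgeFinset.equivFin.symm i : Sym2 V)).out.2} : Finset V) ∧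
          v ∈ ({((G.edgeFinset.equivFin.symm i : Sym2 V)).out.1} : Finset V)))))
        = Finset.univ.filter (fun i : Fin G.edgeFinset.card =>
            (G.edgeFinset.equivFin.symm i : Sym2 V) = s(u, v)) :=
      Finset.filter_congr fun i _ => by rw [key i]
    rw [hfe]
    by_cases hadj : G.Adj u v
    · have hmemE : s(u, v) ∈ G.edgeFinset := by
        rw [SimpleGraph.mem_edgeFinset, SimpleGraph.mem_edgeSet]; exact hadj
      have hfs : Finset.univ.filter (fun i : Fin G.edgeFinset.card =>
          (G.edgeFinset.equivFin.symm i : Sym2 V) = s(u, v))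
          = {G.edgeFinset.equivFin ⟨s(u, v), hmemE⟩} := by
        ext i
        simp only [Finset.mem_filter, Finset.mem_univ, true_and, Finset.mem_singleton]
        constructor
        · intro h
          have h2 : G.edgeFinset.equivFin.symm i = ⟨s(u, v), hmemE⟩ := Subtype.ext h
          calc i = G.edgeFinset.equivFin (G.edgeFinset.equivFin.symm i) :=
                (Equiv.apply_symm_apply _ _).symm
            _ = _ := by rw [h2]
        · rintro rfl
          simp
      rw [hfs, Finset.card_singleton]
      exact iff_of_true hadj odd_one
    · have hfs : Finset.univ.filter (fun i : Fin G.edgeFinset.card =>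
          (G.edgeFinset.equivFin.symm i : Sym2 V) = s(u, v)) = ∅ := by
        ext i
        simp only [Finset.mem_filter, Finset.mem_univ, true_and, Finset.notMem_empty,
          iff_false]
        intro h
        apply hadj
        have hm : s(u, v) ∈ G.edgeFinset := h ▸ (G.edgeFinset.equivFin.symm i).2
        rwa [SimpleGraph.mem_edgeFinset, SimpleGraph.mem_edgeSet] at hm
      rw [hfs]
      exact iff_of_false hadj (by simp)

private lemma matrix_rank_add_le {K : Type*} [Field K] {m n : Type*} [Fintype m] [Fintype n]
    (A B : Matrix m n K) : (A + B).rank ≤ A.rank + B.rank := by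
  classical
  rw [Matrix.rank, Matrix.rank, Matrix.rank, Matrix.mulVecLin_add]
  have h : LinearMap.range (A.mulVecLin + B.mulVecLin) ≤
      LinearMap.range A.mulVecLin ⊔ LinearMap.range B.mulVecLin := by
    rintro _ ⟨x, rfl⟩
    exact Submodule.add_mem_sup ⟨x, rfl⟩ ⟨x, rfl⟩
  calc Module.finrank K (LinearMap.range (A.mulVecLin + B.mulVecLin))
      ≤ Module.finrank K ↥(LinearMap.range A.mulVecLin ⊔ LinearMap.range B.mulVecLin) :=
        Submodule.finrank_mono h
    _ ≤ Module.finrank K (LinearMap.range A.mulVecLin) +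
        Module.finrank K (LinearMap.range B.mulVecLin) := by
        have := Submodule.finrank_sup_add_finrank_inf_eq
          (LinearMap.range A.mulVecLin) (LinearMap.range B.mulVecLin)
        omega

private lemma matrix_rank_vecMulVec_le {K : Type*} [Field K] {m n : Type*} [Fintype m] [Fintype n]
    (x : m → K) (y : n → K) : (Matrix.vecMulVec x y).rank ≤ 1 := by
  classical
  rw [Matrix.vecMulVec_eq Unit]
  calc (Matrix.replicateCol Unit x * Matrix.replicateRow Unit y).rank ≤ (Matrix.replicateCol Unit x).rank :=
        Matrix.rank_mul_le_left _ _
    _ ≤ Fintype.card Unit := Matrix.rank_le_card_width _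
    _ = 1 := by simp

theorem stmt0 {V : Type*} [Fintype V] (G : SimpleGraph V) :
    r2 G ≤ 2 * b2 G := by
  classical
  have hne : {k : ℕ | ∃ B : Fin k → Finset V × Finset V, IsOddCover G B}.Nonempty := by
    obtain ⟨k, B, h⟩ := oddCover_exists G
    exact ⟨k, B, h⟩
  obtain ⟨B, hB⟩ : ∃ B : Fin (b2 G) → Finset V × Finset V, IsOddCover G B :=
    Nat.sInf_mem hne
  set x : Fin (b2 G) → V → ZMod 2 := fun i u => if u ∈ (B i).1 then 1 else 0 with hx
  set y : Fin (b2 G) → V → ZMod 2 := fun i u => if u ∈ (B i).2 then 1 else 0 with hy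
  have hA : (Matrix.of fun u v : V => if G.Adj u v then (1 : ZMod 2) else 0)
      = ∑ i : Fin (b2 G), (vecMulVec (x i) (y i) + vecMulVec (y i) (x i)) := by
    ext u v
    simp only [Matrix.sum_apply, Matrix.add_apply, Matrix.vecMulVec_apply, Matrix.of_apply]
    by_cases huv : u = v
    · subst huv
      rw [if_neg (G.irrefl)]
      refine (Finset.sum_eq_zero fun i _ => ?_).symm
      rw [mul_comm (y i u) (x i u)]
      exact CharTwo.add_self_eq_zero _
    · have hterm : ∀ i : Fin (b2 G), x i u * y i v + y i u * x i v =
          if ((u ∈ (B i).1 ∧ v ∈ (B i).2) ∨ (u ∈ (B i).2 ∧ v ∈ (B i).1)) then 1 else 0 := by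
        intro i
        have hd := hB.1 i
        by_cases h1 : u ∈ (B i).1 <;> by_cases h2 : u ∈ (B i).2 <;>
          by_cases h3 : v ∈ (B i).1 <;> by_cases h4 : v ∈ (B i).2 <;>
          first
            | exact absurd h2 (Finset.disjoint_left.mp hd h1)
            | exact absurd h4 (Finset.disjoint_left.mp hd h3)
            | simp [hx, hy, h1, h2, h3, h4]
      rw [Finset.sum_congr rfl (fun i _ => hterm i), Finset.sum_boole]
      by_cases hadj : G.Adj u v
      · rw [if_pos hadj]
        obtain ⟨m, hm⟩ := (hB.2 u v huv).mp hadj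
        rw [hm]
        push_cast
        rw [show (2 : ZMod 2) = 0 by decide]
        ring
      · rw [if_neg hadj]
        have hno : ¬ Odd (Finset.univ.filter (fun i : Fin (b2 G) =>
            (u ∈ (B i).1 ∧ v ∈ (B i).2) ∨ (u ∈ (B i).2 ∧ v ∈ (B i).1))).card :=
          fun h => hadj ((hB.2 u v huv).mpr h)
        obtain ⟨m, hm⟩ := Nat.not_odd_iff_even.mp hno
        rw [hm]
        push_cast
        exact (CharTwo.add_self_eq_zero _).symm
  have hsum : ∀ s : Finset (Fin (b2 G)),
      (∑ i ∈ s, (vecMulVec (x i) (y i) + vecMulVec (y i) (x i))).rank ≤ 2 * s.card := by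
    intro s
    induction s using Finset.induction with
    | empty => simp
    | insert a s hnotmem ih =>
      rw [Finset.sum_insert hnotmem, Finset.card_insert_of_notMem hnotmem]
      calc (vecMulVec (x a) (y a) + vecMulVec (y a) (x a) +
              ∑ i ∈ s, (vecMulVec (x i) (y i) + vecMulVec (y i) (x i))).rank
          ≤ (vecMulVec (x a) (y a) + vecMulVec (y a) (x a)).rank +
              (∑ i ∈ s, (vecMulVec (x i) (y i) + vecMulVec (y i) (x i))).rank :=
            matrix_rank_add_le _ _
        _ ≤ ((vecMulVec (x a) (y a)).rank + (vecMulVec (y a) (x a)).rank) + 2 * s.card :=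
            Nat.add_le_add (matrix_rank_add_le _ _) ih
        _ ≤ (1 + 1) + 2 * s.card :=
            Nat.add_le_add_right
              (Nat.add_le_add (matrix_rank_vecMulVec_le _ _) (matrix_rank_vecMulVec_le _ _)) _
        _ = 2 * (s.card + 1) := by ring
  calc r2 G = (∑ i : Fin (b2 G), (vecMulVec (x i) (y i) + vecMulVec (y i) (x i))).rank := by
        rw [r2, hA]
    _ ≤ 2 * (Finset.univ : Finset (Fin (b2 G))).card := hsum Finset.univ
    _ = 2 * b2 G := by simp
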